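/- Fix n and parameters p, q, s ∈ [0,1], let (G_1, G_2) ~ CSBM(n, p, q, s), let d, k ∈ [n], and let (M, μ) ∈ M(d) be a π*-maximal matching with d errors. Then for any θ > 0, P(f(μ) ≥ kd) ≤ 3·exp[d(−θk + (1/2)s²γ(e^{2θ}−1) + n(sγ)²(e^{6θ}−1))], where γ = max{p,q}. -/

import Mathlib

open MeasureTheory Finset

/-- Joint probability of the pair of correlated edge indicators `(A_{ij}, B'_{ij})` in a
correlated SBM: `r = p` for a same-community pair (`same = true`), `r = q` otherwise;
`(1,1) ↦ s²r`, `(1,0), (0,1) ↦ s(1−s)r`, `(0,0) ↦ 1 − (2s − s²)r`. -/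
def pairP (p q s : ℝ) (same : Bool) (x y : Bool) : ℝ :=
  if x && y then s ^ 2 * (if same then p else q)
  else if x || y then s * (1 - s) * (if same then p else q)
  else 1 - (2 * s - s ^ 2) * (if same then p else q)

/-- `csbmLaw ℙ n p q s σ A B'`: under `ℙ`, `(σ, A, B')` is distributed as the correlated
SBM `CSBM(n, p, q, s)` (in the coordinates of `G₁`, i.e. `B'` is the adjacency of `G₂`
before relabeling by `π*`): labels i.i.d. uniform, and given labels, the pairs
`(A_{ij}, B'_{ij})` independent across vertex pairs with law `pairP`. -/
def csbmLaw {Ω : Type} [MeasurableSpace Ω] (ℙ : Measure Ω) (n : ℕ) (p q s : ℝ)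
    (σ : Ω → Fin n → Bool) (A B' : Ω → Fin n → Fin n → Bool) : Prop :=
  ℙ {ω | (∀ i j, A ω i j = A ω j i ∧ B' ω i j = B' ω j i) ∧
         ∀ i, A ω i i = false ∧ B' ω i i = false} = 1 ∧
  ∀ (ℓ : Fin n → Bool) (e1 e2 : Fin n → Fin n → Bool),
    (∀ i j, e1 i j = e1 j i ∧ e2 i j = e2 j i) →
    (∀ i, e1 i i = false ∧ e2 i i = false) →
    (ℙ {ω | σ ω = ℓ ∧ A ω = e1 ∧ B' ω = e2}).toReal =
      (1 / 2 : ℝ) ^ n * ∏ i : Fin n, ∏ j : Fin n,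
        (if i < j then pairP p q s (ℓ i == ℓ j) (e1 i j) (e2 i j) else 1)

section EwSec
variable {ι α : Type*} [Fintype ι] [DecidableEq ι] [Fintype α] [DecidableEq α] [Inhabited α]

noncomputable def Ew (w : ι → α → ℝ) (g : (ι → α) → ℝ) : ℝ :=
  ∑ x : ι → α, (∏ i, w i (x i)) * g x

omit [DecidableEq α] [Inhabited α] in
lemma sum_prod_univ (f : ι → α → ℝ) :
    ∑ x : ι → α, ∏ i, f i (x i) = ∏ i, ∑ a, f i a := by
  rw [Finset.prod_univ_sum, Fintype.piFinset_univ]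

omit [DecidableEq α] [Inhabited α] in
lemma Ew_one (w : ι → α → ℝ) (hw : ∀ i, ∑ a, w i a = 1) :
    Ew w (fun _ => 1) = 1 := by
  unfold Ew
  simp only [mul_one]
  rw [sum_prod_univ]
  simp [hw]

omit [Inhabited α] in
lemma Ew_loc1 (w : ι → α → ℝ) (hw : ∀ i, ∑ a, w i a = 1) (i₀ : ι) (G : α → ℝ) :
    Ew w (fun x => G (x i₀)) = ∑ a, w i₀ a * G a := by
  unfold Ew
  calc ∑ x : ι → α, (∏ i, w i (x i)) * G (x i₀)
      = ∑ x : ι → α, ∏ i, (w i (x i) * if i = i₀ then G (x i) else 1) := by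
        refine Finset.sum_congr rfl fun x _ => ?_
        rw [Finset.prod_mul_distrib, Finset.prod_ite_eq' univ i₀ (fun i => G (x i))]
        simp
    _ = ∏ i, ∑ a, (w i a * if i = i₀ then G a else 1) :=
        sum_prod_univ (fun i a => w i a * if i = i₀ then G a else 1)
    _ = ∏ i, (if i = i₀ then ∑ a, w i₀ a * G a else 1) := by
        refine Finset.prod_congr rfl fun i _ => ?_
        by_cases h : i = i₀
        · subst h; simp
        · simp [h, hw i]
    _ = ∑ a, w i₀ a * G a := by
        rw [Finset.prod_ite_eq' univ i₀ (fun _ => ∑ a, w i₀ a * G a)]; simp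

omit [Inhabited α] in
lemma Ew_loc2 (w : ι → α → ℝ) (hw : ∀ i, ∑ a, w i a = 1) {i₀ i₁ : ι} (hne : i₀ ≠ i₁)
    (G H : α → ℝ) :
    Ew w (fun x => G (x i₀) * H (x i₁)) = (∑ a, w i₀ a * G a) * (∑ a, w i₁ a * H a) := by
  have key : ∀ F : ι → ℝ, (∀ i, i ≠ i₀ → i ≠ i₁ → F i = 1) → ∏ i, F i = F i₀ * F i₁ := by
    intro F hF
    rw [← Finset.prod_subset (Finset.subset_univ ({i₀, i₁} : Finset ι))
      (by intro x _ hx; simp only [mem_insert, mem_singleton] at hx; push_neg at hx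
          exact hF x hx.1 hx.2)]
    exact Finset.prod_pair hne
  unfold Ew
  calc ∑ x : ι → α, (∏ i, w i (x i)) * (G (x i₀) * H (x i₁))
      = ∑ x : ι → α, ∏ i, (w i (x i) * if i = i₀ then G (x i) else if i = i₁ then H (x i) else 1) := by
        refine Finset.sum_congr rfl fun x _ => ?_
        rw [Finset.prod_mul_distrib,
          key (fun i => if i = i₀ then G (x i) else if i = i₁ then H (x i) else 1)
            (fun i h h' => by simp [h, h'])]
        simp [hne, hne.symm]
    _ = ∏ i, ∑ a, (w i a * if i = i₀ then G a else if i = i₁ then H a else 1) :=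
        sum_prod_univ (fun i a => w i a * if i = i₀ then G a else if i = i₁ then H a else 1)
    _ = ∏ i, (if i = i₀ then ∑ a, w i₀ a * G a else if i = i₁ then ∑ a, w i₁ a * H a else 1) := by
        refine Finset.prod_congr rfl fun i _ => ?_
        by_cases h : i = i₀
        · subst h; simp
        · by_cases h' : i = i₁
          · subst h'; simp [h]
          · simp [h, h', hw i]
    _ = (∑ a, w i₀ a * G a) * (∑ a, w i₁ a * H a) := by
        rw [key _ (fun i h h' => by simp [h, h'])]
        simp [hne, hne.symm]

def DepOn (S : Finset ι) (g : (ι → α) → ℝ) : Prop :=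
  ∀ x y, (∀ i ∈ S, x i = y i) → g x = g y

lemma Ew_mul_split (w : ι → α → ℝ) (hw : ∀ i, ∑ a, w i a = 1)
    (p : ι → Prop) [DecidablePred p] {g h : (ι → α) → ℝ}
    (hg : ∀ x y : ι → α, (∀ i, p i → x i = y i) → g x = g y)
    (hh : ∀ x y : ι → α, (∀ i, ¬ p i → x i = y i) → h x = h y) :
    Ew w (fun x => g x * h x) = Ew w g * Ew w h := by
  have hsum : ∀ Φ : (ι → α) → ℝ, ∑ x : ι → α, Φ x
      = ∑ y : {i // p i} → α, ∑ z : {i // ¬ p i} → α,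
          Φ ((Equiv.piEquivPiSubtypeProd p (fun _ => α)).symm (y, z)) := by
    intro Φ
    rw [← Equiv.sum_comp (Equiv.piEquivPiSubtypeProd p (fun _ => α)).symm Φ,
      Fintype.sum_prod_type]
  have hsplit : ∀ (y : {i // p i} → α) (z : {i // ¬ p i} → α),
      (∏ i, w i ((Equiv.piEquivPiSubtypeProd p (fun _ => α)).symm (y, z) i))
        = (∏ i : {i // p i}, w i (y i)) * (∏ i : {i // ¬ p i}, w i (z i)) := by
    intro y z
    rw [← Fintype.prod_subtype_mul_prod_subtype p
      (fun i => w i ((Equiv.piEquivPiSubtypeProd p (fun _ => α)).symm (y, z) i))]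
    congr 1
    · refine Finset.prod_congr rfl fun i _ => ?_
      rw [Equiv.piEquivPiSubtypeProd_symm_apply, dif_pos i.2]
    · refine Finset.prod_congr rfl fun i _ => ?_
      rw [Equiv.piEquivPiSubtypeProd_symm_apply, dif_neg i.2]
  have hgy : ∀ (y : {i // p i} → α) (z z' : {i // ¬ p i} → α),
      g ((Equiv.piEquivPiSubtypeProd p (fun _ => α)).symm (y, z))
        = g ((Equiv.piEquivPiSubtypeProd p (fun _ => α)).symm (y, z')) := by
    intro y z z'
    refine hg _ _ fun i hi => ?_
    rw [Equiv.piEquivPiSubtypeProd_symm_apply, Equiv.piEquivPiSubtypeProd_symm_apply,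
      dif_pos hi, dif_pos hi]
  have hhz : ∀ (y y' : {i // p i} → α) (z : {i // ¬ p i} → α),
      h ((Equiv.piEquivPiSubtypeProd p (fun _ => α)).symm (y, z))
        = h ((Equiv.piEquivPiSubtypeProd p (fun _ => α)).symm (y', z)) := by
    intro y y' z
    refine hh _ _ fun i hi => ?_
    rw [Equiv.piEquivPiSubtypeProd_symm_apply, Equiv.piEquivPiSubtypeProd_symm_apply,
      dif_neg hi, dif_neg hi]
  set y₀ : {i // p i} → α := fun _ => default
  set z₀ : {i // ¬ p i} → α := fun _ => default
  set G : ({i // p i} → α) → ℝ :=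
    fun y => g ((Equiv.piEquivPiSubtypeProd p (fun _ => α)).symm (y, z₀)) with hG
  set H : ({i // ¬ p i} → α) → ℝ :=
    fun z => h ((Equiv.piEquivPiSubtypeProd p (fun _ => α)).symm (y₀, z)) with hH
  have hSZ1 : ∑ z : {i // ¬ p i} → α, ∏ i : {i // ¬ p i}, w i (z i) = 1 := by
    rw [sum_prod_univ (fun (i : {i // ¬ p i}) a => w i a)]
    simp [hw]
  have hSY1 : ∑ y : {i // p i} → α, ∏ i : {i // p i}, w i (y i) = 1 := by
    rw [sum_prod_univ (fun (i : {i // p i}) a => w i a)]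
    simp [hw]
  have e1 : Ew w (fun x => g x * h x)
      = (∑ y : {i // p i} → α, (∏ i : {i // p i}, w i (y i)) * G y)
        * (∑ z : {i // ¬ p i} → α, (∏ i : {i // ¬ p i}, w i (z i)) * H z) := by
    unfold Ew
    rw [hsum, Finset.sum_mul_sum]
    refine Finset.sum_congr rfl fun y _ => Finset.sum_congr rfl fun z _ => ?_
    dsimp only
    rw [hsplit y z]
    have : g ((Equiv.piEquivPiSubtypeProd p (fun _ => α)).symm (y, z)) = G y := hgy y z z₀
    have h2 : h ((Equiv.piEquivPiSubtypeProd p (fun _ => α)).symm (y, z)) = H z := hhz y y₀ z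
    rw [this, h2]
    ring
  have e2 : Ew w g = ∑ y : {i // p i} → α, (∏ i : {i // p i}, w i (y i)) * G y := by
    unfold Ew
    rw [hsum]
    calc ∑ y : {i // p i} → α, ∑ z : {i // ¬ p i} → α,
          (∏ i, w i ((Equiv.piEquivPiSubtypeProd p (fun _ => α)).symm (y, z) i))
            * g ((Equiv.piEquivPiSubtypeProd p (fun _ => α)).symm (y, z))
        = ∑ y : {i // p i} → α, ∑ z : {i // ¬ p i} → α,
            ((∏ i : {i // p i}, w i (y i)) * G y) * ∏ i : {i // ¬ p i}, w i (z i) := by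
          refine Finset.sum_congr rfl fun y _ => Finset.sum_congr rfl fun z _ => ?_
          rw [hsplit y z, hgy y z z₀]
          ring
      _ = ∑ y : {i // p i} → α, ((∏ i : {i // p i}, w i (y i)) * G y)
            * ∑ z : {i // ¬ p i} → α, ∏ i : {i // ¬ p i}, w i (z i) := by
          refine Finset.sum_congr rfl fun y _ => ?_
          rw [← Finset.mul_sum]
      _ = _ := by rw [hSZ1]; simp
  have e3 : Ew w h = ∑ z : {i // ¬ p i} → α, (∏ i : {i // ¬ p i}, w i (z i)) * H z := by
    unfold Ew
    rw [hsum]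
    calc ∑ y : {i // p i} → α, ∑ z : {i // ¬ p i} → α,
          (∏ i, w i ((Equiv.piEquivPiSubtypeProd p (fun _ => α)).symm (y, z) i))
            * h ((Equiv.piEquivPiSubtypeProd p (fun _ => α)).symm (y, z))
        = ∑ y : {i // p i} → α, (∏ i : {i // p i}, w i (y i))
            * ∑ z : {i // ¬ p i} → α, (∏ i : {i // ¬ p i}, w i (z i)) * H z := by
          refine Finset.sum_congr rfl fun y _ => ?_
          rw [Finset.mul_sum]
          refine Finset.sum_congr rfl fun z _ => ?_
          rw [hsplit y z, hhz y y₀ z]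
          ring
      _ = _ := by rw [← Finset.sum_mul, hSY1, one_mul]
  rw [e1, e2, e3]

lemma Ew_mul_of_depOn (w : ι → α → ℝ) (hw : ∀ i, ∑ a, w i a = 1) {S T : Finset ι}
    {g h : (ι → α) → ℝ} (hg : DepOn S g) (hh : DepOn T h) (hST : Disjoint S T) :
    Ew w (fun x => g x * h x) = Ew w g * Ew w h := by
  refine Ew_mul_split w hw (fun i => i ∈ S) ?_ ?_
  · exact fun x y hxy => hg x y fun i hi => hxy i hi
  · exact fun x y hxy => hh x y fun i hi =>
      hxy i (fun hiS => (Finset.disjoint_left.mp hST) hiS hi)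

lemma Ew_prod_of_depOn (w : ι → α → ℝ) (hw : ∀ i, ∑ a, w i a = 1) {τ : Type*}
    [DecidableEq τ] {F : Finset τ} (B : τ → Finset ι) (h : τ → (ι → α) → ℝ)
    (hdep : ∀ t ∈ F, DepOn (B t) (h t))
    (hdisj : ∀ t ∈ F, ∀ t' ∈ F, t ≠ t' → Disjoint (B t) (B t')) :
    Ew w (fun x => ∏ t ∈ F, h t x) = ∏ t ∈ F, Ew w (h t) := by
  classical
  induction F using Finset.cons_induction with
  | empty => simpa using Ew_one w hw
  | cons a F' ha ih =>
    have hprod : (fun x => ∏ t ∈ Finset.cons a F' ha, h t x)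
        = fun x => h a x * ∏ t ∈ F', h t x := by
      funext x; rw [Finset.prod_cons]
    rw [hprod, Finset.prod_cons]
    rw [Ew_mul_of_depOn w hw (S := B a) (T := F'.biUnion B)
      (hdep a (Finset.mem_cons_self a F'))
      (fun x y hxy => Finset.prod_congr rfl fun t ht =>
        hdep t (Finset.mem_cons_of_mem ht) x y
          (fun i hi => hxy i (Finset.mem_biUnion.mpr ⟨t, ht, hi⟩)))
      ((Finset.disjoint_biUnion_right _ _ _).mpr fun t ht =>
        hdisj a (Finset.mem_cons_self a F') t (Finset.mem_cons_of_mem ht)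
          (fun hat => ha (hat ▸ ht)))]
    rw [ih (fun t ht => hdep t (Finset.mem_cons_of_mem ht))
      (fun t ht t' ht' => hdisj t (Finset.mem_cons_of_mem ht) t' (Finset.mem_cons_of_mem ht'))]

end EwSec

lemma exists_coloring {β : Type*} [DecidableEq β] (g : β → β) (S : Finset β) :
    Set.InjOn g ↑S →
    ∃ c : β → Fin 3, ∀ t ∈ S, ∀ t' ∈ S, t ≠ t' → c t = c t' → g t ≠ t' ∧ g t' ≠ t := by
  classical
  induction S using Finset.cons_induction with
  | empty => exact fun _ => ⟨fun _ => 0, by simp⟩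
  | cons a S' ha ih =>
    intro hg
    have hsub : (↑S' : Set β) ⊆ ↑(Finset.cons a S' ha) := by
      rw [Finset.coe_cons]; exact Set.subset_insert _ _
    obtain ⟨c, hc⟩ := ih (hg.mono hsub)
    set Forb : Finset (Fin 3) := (S'.filter (fun t => g t = a ∨ g a = t)).image c with hForb
    have hcard : Forb.card ≤ 2 := by
      have h1 : (S'.filter (fun t => g t = a ∨ g a = t))
          ⊆ (S'.filter (fun t => g t = a)) ∪ (S'.filter (fun t => g a = t)) := by
        intro x hx
        simp only [Finset.mem_filter, Finset.mem_union] at *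
        tauto
      have h2 : (S'.filter (fun t => g t = a)).card ≤ 1 := by
        refine Finset.card_le_one.mpr fun x hx y hy => ?_
        simp only [Finset.mem_filter] at hx hy
        exact hg (hsub hx.1) (hsub hy.1) (hx.2.trans hy.2.symm)
      have h3 : (S'.filter (fun t => g a = t)).card ≤ 1 := by
        refine Finset.card_le_one.mpr fun x hx y hy => ?_
        simp only [Finset.mem_filter] at hx hy
        exact hx.2.symm.trans hy.2
      calc Forb.card ≤ (S'.filter (fun t => g t = a ∨ g a = t)).card :=
            Finset.card_image_le
        _ ≤ _ := Finset.card_le_card h1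
        _ ≤ 1 + 1 := le_trans (Finset.card_union_le _ _) (add_le_add h2 h3)
    obtain ⟨m, hm⟩ : ∃ m : Fin 3, m ∉ Forb := by
      by_contra hcon
      push_neg at hcon
      have hss : (Finset.univ : Finset (Fin 3)) ⊆ Forb := fun m _ => hcon m
      have := Finset.card_le_card hss
      simp only [Finset.card_univ, Fintype.card_fin] at this
      omega
    refine ⟨Function.update c a m, fun t ht t' ht' hne hcc => ?_⟩
    rw [Finset.mem_cons] at ht ht'
    have hta : ∀ u, u ∈ S' → u ≠ a := fun u hu he => ha (he ▸ hu)
    rcases ht with rfl | ht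
    · rcases ht' with rfl | ht'
      · exact absurd rfl hne
      · rw [Function.update_self, Function.update_of_ne (hta t' ht')] at hcc
        have hnin : ¬ (g t' = t ∨ g t = t') := by
          intro hor
          exact hm (hcc ▸ Finset.mem_image_of_mem c (Finset.mem_filter.mpr ⟨ht', hor⟩))
        push_neg at hnin
        exact ⟨hnin.2, hnin.1⟩
    · rcases ht' with rfl | ht'
      · rw [Function.update_self, Function.update_of_ne (hta t ht)] at hcc
        have hnin : ¬ (g t = t' ∨ g t' = t) := by
          intro hor
          exact hm (hcc.symm ▸ Finset.mem_image_of_mem c (Finset.mem_filter.mpr ⟨ht, hor⟩))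
        push_neg at hnin
        exact ⟨hnin.1, hnin.2⟩
      · rw [Function.update_of_ne (hta t ht), Function.update_of_ne (hta t' ht')] at hcc
        exact hc t ht t' ht' hne hcc

lemma three_cube (u v w : ℝ) (hu : 0 ≤ u) (hv : 0 ≤ v) (hw : 0 ≤ w) :
    u * v * w ≤ (u ^ 3 + v ^ 3 + w ^ 3) / 3 := by
  nlinarith [mul_nonneg (add_nonneg (add_nonneg hu hv) hw) (sq_nonneg (u - v)),
    mul_nonneg (add_nonneg (add_nonneg hu hv) hw) (sq_nonneg (v - w)),
    mul_nonneg (add_nonneg (add_nonneg hu hv) hw) (sq_nonneg (u - w))]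
open Finset

abbrev SP (n : ℕ) := {p : Fin n × Fin n // p.1 < p.2}

variable {n : ℕ}

def mkSP (jk : SP n) (a b : Fin n) : SP n :=
  if h : a < b then ⟨(a, b), h⟩ else if h : b < a then ⟨(b, a), h⟩ else jk

lemma mkSP_of_lt (jk : SP n) {a b : Fin n} (h : a < b) : mkSP jk a b = ⟨(a, b), h⟩ :=
  dif_pos h

lemma mkSP_comm (jk : SP n) (a b : Fin n) : mkSP jk a b = mkSP jk b a := by
  unfold mkSP
  rcases lt_trichotomy a b with h | h | h
  · rw [dif_pos h, dif_neg (asymm h), dif_pos h]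
  · subst h; simp
  · rw [dif_neg (asymm h), dif_pos h, dif_pos h]

lemma mkSP_val (jk : SP n) {a b : Fin n} (hne : a ≠ b) :
    (mkSP jk a b).1 = (a, b) ∨ (mkSP jk a b).1 = (b, a) := by
  unfold mkSP
  rcases lt_trichotomy a b with h | h | h
  · rw [dif_pos h]; left; rfl
  · exact absurd h hne
  · rw [dif_neg (asymm h), dif_pos h]; right; rfl

lemma mkSP_self (jk : SP n) (t : SP n) : mkSP jk t.1.1 t.1.2 = t := by
  rw [mkSP_of_lt jk t.2]

def mat (x : SP n → Bool × Bool) (sel : Bool × Bool → Bool) (i j : Fin n) : Bool :=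
  if h : i < j then sel (x ⟨(i, j), h⟩) else if h : j < i then sel (x ⟨(j, i), h⟩) else false

lemma mat_symm (x : SP n → Bool × Bool) (sel : Bool × Bool → Bool) (i j : Fin n) :
    mat x sel i j = mat x sel j i := by
  unfold mat
  rcases lt_trichotomy i j with h | h | h
  · rw [dif_pos h, dif_neg (asymm h), dif_pos h]
  · subst h; rfl
  · rw [dif_neg (asymm h), dif_pos h, dif_pos h]

lemma mat_diag (x : SP n → Bool × Bool) (sel : Bool × Bool → Bool) (i : Fin n) :
    mat x sel i i = false := by
  unfold mat
  rw [dif_neg (lt_irrefl i), dif_neg (lt_irrefl i)]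

lemma mat_eq (x : SP n → Bool × Bool) (sel : Bool × Bool → Bool) (jk : SP n)
    {i j : Fin n} (hne : i ≠ j) : mat x sel i j = sel (x (mkSP jk i j)) := by
  unfold mat mkSP
  rcases lt_trichotomy i j with h | h | h
  · rw [dif_pos h, dif_pos h]
  · exact absurd h hne
  · rw [dif_neg (asymm h), dif_pos h, dif_neg (asymm h), dif_pos h]

lemma prod_upper (gfun : Fin n → Fin n → ℝ) :
    (∏ i, ∏ j, if i < j then gfun i j else 1) = ∏ t : SP n, gfun t.1.1 t.1.2 := by
  rw [← Fintype.prod_prod_type (fun pp : Fin n × Fin n => if pp.1 < pp.2 then gfun pp.1 pp.2 else 1)]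
  rw [← Finset.prod_filter (fun pp : Fin n × Fin n => pp.1 < pp.2)
    (fun pp : Fin n × Fin n => gfun pp.1 pp.2)]
  exact Finset.prod_subtype _ (fun pp => by simp) _

def GoodPair (e : (Fin n → Fin n → Bool) × (Fin n → Fin n → Bool)) : Prop :=
  (∀ i j, e.1 i j = e.1 j i ∧ e.2 i j = e.2 j i) ∧ ∀ i, e.1 i i = false ∧ e.2 i i = false

instance : DecidablePred (GoodPair (n := n)) := fun e => by
  unfold GoodPair; infer_instance

lemma goodPair_mat (x : SP n → Bool × Bool) : GoodPair (mat x Prod.fst, mat x Prod.snd) :=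
  ⟨fun i j => ⟨mat_symm x _ i j, mat_symm x _ i j⟩, fun i => ⟨mat_diag x _ i, mat_diag x _ i⟩⟩

lemma toX_mat1 (e : (Fin n → Fin n → Bool) × (Fin n → Fin n → Bool)) (he : GoodPair e) :
    mat (fun t : SP n => (e.1 t.1.1 t.1.2, e.2 t.1.1 t.1.2)) Prod.fst = e.1 := by
  obtain ⟨hsymm, hdiag⟩ := he
  funext i j
  unfold mat
  rcases lt_trichotomy i j with h | h | h
  · rw [dif_pos h]
  · subst h; rw [dif_neg (lt_irrefl i), dif_neg (lt_irrefl i), (hdiag i).1]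
  · rw [dif_neg (asymm h), dif_pos h]; exact (hsymm j i).1.symm ▸ rfl

lemma toX_mat2 (e : (Fin n → Fin n → Bool) × (Fin n → Fin n → Bool)) (he : GoodPair e) :
    mat (fun t : SP n => (e.1 t.1.1 t.1.2, e.2 t.1.1 t.1.2)) Prod.snd = e.2 := by
  obtain ⟨hsymm, hdiag⟩ := he
  funext i j
  unfold mat
  rcases lt_trichotomy i j with h | h | h
  · rw [dif_pos h]
  · subst h; rw [dif_neg (lt_irrefl i), dif_neg (lt_irrefl i), (hdiag i).2]
  · rw [dif_neg (asymm h), dif_pos h]; exact (hsymm j i).2.symm ▸ rfl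

lemma sum_good_eq (Φ : (Fin n → Fin n → Bool) → (Fin n → Fin n → Bool) → ℝ) :
    ∑ e ∈ univ.filter (GoodPair (n := n)), Φ e.1 e.2
      = ∑ x : SP n → Bool × Bool, Φ (mat x Prod.fst) (mat x Prod.snd) := by
  refine Finset.sum_nbij' (i := fun e => fun t : SP n => (e.1 t.1.1 t.1.2, e.2 t.1.1 t.1.2))
    (j := fun x => (mat x Prod.fst, mat x Prod.snd)) ?_ ?_ ?_ ?_ ?_
  · intro e _; exact Finset.mem_univ _
  · intro x _; exact Finset.mem_filter.mpr ⟨Finset.mem_univ _, goodPair_mat x⟩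
  · intro e he
    rw [Finset.mem_filter] at he
    rw [toX_mat1 e he.2, toX_mat2 e he.2]
  · intro x _
    funext t
    show (mat x Prod.fst t.1.1 t.1.2, mat x Prod.snd t.1.1 t.1.2) = x t
    unfold mat
    rw [dif_pos t.2, dif_pos t.2]
  · intro e he
    rw [Finset.mem_filter] at he
    rw [toX_mat1 e he.2, toX_mat2 e he.2]

section EwExtra
variable {ι α : Type*} [Fintype ι] [DecidableEq ι] [Fintype α] [DecidableEq α]

lemma Ew_nonneg (w : ι → α → ℝ) (hw0 : ∀ i a, 0 ≤ w i a) {g : (ι → α) → ℝ}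
    (hg : ∀ x, 0 ≤ g x) : 0 ≤ Ew w g :=
  Finset.sum_nonneg fun x _ => mul_nonneg (Finset.prod_nonneg fun i _ => hw0 i (x i)) (hg x)

lemma Ew_mono (w : ι → α → ℝ) (hw0 : ∀ i a, 0 ≤ w i a) {g g' : (ι → α) → ℝ}
    (h : ∀ x, g x ≤ g' x) : Ew w g ≤ Ew w g' :=
  Finset.sum_le_sum fun x _ =>
    mul_le_mul_of_nonneg_left (h x) (Finset.prod_nonneg fun i _ => hw0 i (x i))

lemma Ew_sum (w : ι → α → ℝ) {κ : Type*} (s : Finset κ) (g : κ → (ι → α) → ℝ) :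
    Ew w (fun x => ∑ m ∈ s, g m x) = ∑ m ∈ s, Ew w (g m) := by
  unfold Ew
  rw [Finset.sum_comm]
  exact Finset.sum_congr rfl fun x _ => by rw [Finset.mul_sum]

lemma Ew_affine (w : ι → α → ℝ) (hw : ∀ i, ∑ a, w i a = 1) (a b : ℝ)
    (g : (ι → α) → ℝ) : Ew w (fun x => a + b * g x) = a + b * Ew w g := by
  unfold Ew
  have h : ∀ x : ι → α, (∏ i, w i (x i)) * (a + b * g x)
      = a * (∏ i, w i (x i)) + b * ((∏ i, w i (x i)) * g x) := fun x => by ring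
  rw [Finset.sum_congr rfl fun x _ => h x, Finset.sum_add_distrib, ← Finset.mul_sum,
    ← Finset.mul_sum, sum_prod_univ (fun i a => w i a)]
  simp [hw]

lemma Ew_const_mul (w : ι → α → ℝ) (c : ℝ) (g : (ι → α) → ℝ) :
    Ew w (fun x => c * g x) = c * Ew w g := by
  unfold Ew
  rw [Finset.mul_sum]
  exact Finset.sum_congr rfl fun x _ => by ring

end EwExtra

lemma exp_split3 (A B0 B1 B2 : ℝ) :
    Real.exp (A + (B0 + B1 + B2)) ≤
      (1/3) * (Real.exp (A + 3*B0) + Real.exp (A + 3*B1) + Real.exp (A + 3*B2)) := by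
  have h1 : Real.exp (A + (B0 + B1 + B2))
      = Real.exp A * (Real.exp B0 * Real.exp B1 * Real.exp B2) := by
    rw [← Real.exp_add, ← Real.exp_add, ← Real.exp_add]
  have h2 : Real.exp B0 * Real.exp B1 * Real.exp B2
      ≤ (Real.exp B0 ^ 3 + Real.exp B1 ^ 3 + Real.exp B2 ^ 3) / 3 :=
    three_cube _ _ _ (Real.exp_nonneg _) (Real.exp_nonneg _) (Real.exp_nonneg _)
  have h3 : ∀ B : ℝ, Real.exp B ^ 3 = Real.exp (3 * B) := by
    intro B
    rw [show (3:ℝ) * B = (3:ℕ) * B by norm_num, Real.exp_nat_mul]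
  calc Real.exp (A + (B0 + B1 + B2))
      ≤ Real.exp A * ((Real.exp B0 ^ 3 + Real.exp B1 ^ 3 + Real.exp B2 ^ 3) / 3) := by
        rw [h1]; exact mul_le_mul_of_nonneg_left h2 (Real.exp_nonneg _)
    _ = (1/3) * (Real.exp (A + 3*B0) + Real.exp (A + 3*B1) + Real.exp (A + 3*B2)) := by
        rw [Real.exp_add A (3*B0), Real.exp_add A (3*B1), Real.exp_add A (3*B2), h3, h3, h3]
        ring

section CoreBound

variable {n : ℕ}

lemma core_bound (Q : SP n → SP n) (Terms : Finset (SP n))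
    (hQinj : Set.InjOn Q ↑Terms)
    (w : SP n → Bool × Bool → ℝ) (hw0 : ∀ t b, 0 ≤ w t b)
    (hw1 : ∀ t, ∑ b : Bool × Bool, w t b = 1)
    (γ1 γ2 : ℝ) (hγ1 : 0 ≤ γ1) (hγ2 : 0 ≤ γ2)
    (hwtt : ∀ t, w t (true, true) ≤ γ1)
    (hm1 : ∀ t, ∑ b : Bool × Bool, w t b * (if b.1 = true then 1 else 0) ≤ γ2)
    (hm2 : ∀ t, ∑ b : Bool × Bool, w t b * (if b.2 = true then 1 else 0) ≤ γ2)
    (θ : ℝ) (hθ : 0 < θ) (cT cN : ℝ)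
    (hcT : 2 * ((Terms.filter (fun t => Q t = t)).card : ℝ) ≤ cT) (hcT0 : 0 ≤ cT)
    (hcN : (Terms.card : ℝ) ≤ cN) :
    Ew w (fun x => Real.exp (θ * ∑ t ∈ Terms,
        (2 * (if (x t).1 = true ∧ (x (Q t)).2 = true then (1:ℝ) else 0))))
      ≤ Real.exp (cT / 2 * (γ1 * (Real.exp (2 * θ) - 1))
          + cN * (γ2 ^ 2 * (Real.exp (6 * θ) - 1))) := by
  classical
  set χ : SP n → (SP n → Bool × Bool) → ℝ :=
    fun t x => if (x t).1 = true ∧ (x (Q t)).2 = true then (1:ℝ) else 0 with hχ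
  set Tset := Terms.filter (fun t => Q t = t) with hTset
  set NT := Terms.filter (fun t => ¬ Q t = t) with hNT
  have hNTsub : NT ⊆ Terms := Finset.filter_subset _ _
  have hTsub : Tset ⊆ Terms := Finset.filter_subset _ _
  obtain ⟨col, hcol⟩ := exists_coloring Q NT (hQinj.mono (Finset.coe_subset.mpr hNTsub))
  set NTm : Fin 3 → Finset (SP n) := fun m => NT.filter (fun t => col t = m) with hNTm
  have e2θ1 : (1:ℝ) ≤ Real.exp (2 * θ) := Real.one_le_exp (by linarith)
  have e6θ1 : (1:ℝ) ≤ Real.exp (6 * θ) := Real.one_le_exp (by linarith)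
  set hf : SP n → (SP n → Bool × Bool) → ℝ :=
    fun t x => Real.exp ((if Q t = t then 2 * θ else 6 * θ) * χ t x) with hhf
  -- per-term bounds
  have htrans : ∀ t, Q t = t →
      Ew w (hf t) ≤ 1 + γ1 * (Real.exp (2 * θ) - 1) := by
    intro t hQt
    set G1 : Bool × Bool → ℝ :=
      fun a => 1 + (Real.exp (2 * θ) - 1) * (if a = (true, true) then 1 else 0) with hG1
    have hfun : hf t = fun x => G1 (x t) := by
      funext x
      rw [hhf, hχ, hG1]
      dsimp only
      rw [if_pos hQt, hQt]
      by_cases h1 : (x t).1 = true <;> by_cases h2 : (x t).2 = true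
      · rw [if_pos ⟨h1, h2⟩, if_pos (Prod.ext h1 h2), mul_one, mul_one]; ring
      · rw [if_neg (fun hc => h2 hc.2), if_neg (fun hc => h2 (by rw [hc]))]
        simp
      · rw [if_neg (fun hc => h1 hc.1), if_neg (fun hc => h1 (by rw [hc]))]
        simp
      · rw [if_neg (fun hc => h1 hc.1), if_neg (fun hc => h1 (by rw [hc]))]
        simp
    rw [hfun, Ew_loc1 w hw1 t G1]
    have hsum : ∑ a : Bool × Bool, w t a * G1 a
        = 1 + (Real.exp (2 * θ) - 1) * w t (true, true) := by
      have expand : ∀ a : Bool × Bool, w t a * G1 a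
          = w t a + (Real.exp (2 * θ) - 1) * (if a = (true, true) then w t a else 0) := by
        intro a; rw [hG1]; dsimp only; split_ifs <;> ring
      rw [Finset.sum_congr rfl fun a _ => expand a, Finset.sum_add_distrib, hw1 t,
        ← Finset.mul_sum, Finset.sum_ite_eq' Finset.univ (true, true) (w t)]
      simp
    rw [hsum]
    nlinarith [hwtt t]
  have hnont : ∀ t, ¬ Q t = t →
      Ew w (hf t) ≤ 1 + γ2 ^ 2 * (Real.exp (6 * θ) - 1) := by
    intro t hQt
    set G2 : Bool × Bool → ℝ := fun a => if a.1 = true then (1:ℝ) else 0 with hG2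
    set H2 : Bool × Bool → ℝ := fun a => if a.2 = true then (1:ℝ) else 0 with hH2
    set gGH : (SP n → Bool × Bool) → ℝ := fun x => G2 (x t) * H2 (x (Q t)) with hgGH
    have hfun : hf t = fun x => 1 + (Real.exp (6 * θ) - 1) * gGH x := by
      funext x
      rw [hhf, hχ, hgGH, hG2, hH2]
      dsimp only
      rw [if_neg hQt]
      by_cases h1 : (x t).1 = true <;> by_cases h2 : (x (Q t)).2 = true
      · rw [if_pos ⟨h1, h2⟩, if_pos h1, if_pos h2, mul_one, mul_one, mul_one]; ring
      · rw [if_neg (fun hc => h2 hc.2), if_neg h2]; simp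
      · rw [if_neg (fun hc => h1 hc.1), if_neg h1]; simp
      · rw [if_neg (fun hc => h1 hc.1), if_neg h1]; simp
    rw [hfun, Ew_affine w hw1 1 (Real.exp (6 * θ) - 1) gGH]
    have hloc : Ew w gGH = (∑ a : Bool × Bool, w t a * G2 a)
        * (∑ a : Bool × Bool, w (Q t) a * H2 a) := by
      rw [hgGH]
      exact Ew_loc2 w hw1 (fun h => hQt h.symm) G2 H2
    rw [hloc]
    have hG0 : 0 ≤ ∑ a : Bool × Bool, w t a * G2 a :=
      Finset.sum_nonneg fun a _ => mul_nonneg (hw0 t a)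
        (by rw [hG2]; dsimp only; split_ifs <;> norm_num)
    have hH0 : 0 ≤ ∑ a : Bool × Bool, w (Q t) a * H2 a :=
      Finset.sum_nonneg fun a _ => mul_nonneg (hw0 (Q t) a)
        (by rw [hH2]; dsimp only; split_ifs <;> norm_num)
    have hprod : (∑ a : Bool × Bool, w t a * G2 a)
        * (∑ a : Bool × Bool, w (Q t) a * H2 a) ≤ γ2 ^ 2 := by
      rw [sq]
      exact mul_le_mul (hm1 t) (hm2 (Q t)) hH0 hγ2
    nlinarith [hprod]
  -- expectation of exp of colored sums
  set Gm : Fin 3 → (SP n → Bool × Bool) → ℝ := fun m x =>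
    Real.exp ((∑ t ∈ Tset, 2 * θ * χ t x) + ∑ t ∈ NTm m, 6 * θ * χ t x) with hGm
  -- pointwise split
  have hpt : ∀ x, Real.exp (θ * ∑ t ∈ Terms, (2 * χ t x))
      ≤ (1/3) * ∑ m : Fin 3, Gm m x := by
    intro x
    have hA : θ * ∑ t ∈ Terms, (2 * χ t x)
        = (∑ t ∈ Tset, 2 * θ * χ t x) + ∑ t ∈ NT, 2 * θ * χ t x := by
      rw [← Finset.sum_union (Finset.disjoint_filter_filter_not Terms Terms _)]
      rw [Finset.filter_union_filter_not_eq, Finset.mul_sum]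
      exact Finset.sum_congr rfl fun t _ => by ring
    have hB : ∑ t ∈ NT, 2 * θ * χ t x = ∑ m : Fin 3, ∑ t ∈ NTm m, 2 * θ * χ t x :=
      (Finset.sum_fiberwise NT col _).symm
    have h6 : ∀ m : Fin 3, ∑ t ∈ NTm m, 6 * θ * χ t x
        = 3 * ∑ t ∈ NTm m, 2 * θ * χ t x := by
      intro m; rw [Finset.mul_sum]; exact Finset.sum_congr rfl fun t _ => by ring
    have hGm3 : ∀ m : Fin 3, Gm m x = Real.exp ((∑ t ∈ Tset, 2 * θ * χ t x)
        + 3 * ∑ t ∈ NTm m, 2 * θ * χ t x) := by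
      intro m; rw [hGm]; dsimp only; rw [h6 m]
    rw [hA, hB, Fin.sum_univ_three, Fin.sum_univ_three, hGm3 0, hGm3 1, hGm3 2]
    exact exp_split3 _ _ _ _
  -- per-color bound
  set Bd : ℝ := Real.exp (cT / 2 * (γ1 * (Real.exp (2 * θ) - 1))
      + cN * (γ2 ^ 2 * (Real.exp (6 * θ) - 1))) with hBd
  have hmbound : ∀ m : Fin 3, Ew w (Gm m) ≤ Bd := by
    intro m
    have hNTmsub : NTm m ⊆ NT := Finset.filter_subset _ _
    have hdisjTm : Disjoint Tset (NTm m) :=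
      (Finset.disjoint_filter_filter_not Terms Terms _).mono_right hNTmsub
    have hUsub : Tset ∪ NTm m ⊆ Terms :=
      Finset.union_subset hTsub (hNTmsub.trans hNTsub)
    have hprodform : Gm m = fun x => ∏ t ∈ Tset ∪ NTm m, hf t x := by
      funext x
      rw [hGm, hhf]
      dsimp only
      rw [Real.exp_add, Real.exp_sum, Real.exp_sum, Finset.prod_union hdisjTm]
      congr 1
      · exact Finset.prod_congr rfl fun t ht => by
          rw [if_pos (Finset.mem_filter.mp ht).2]
      · exact Finset.prod_congr rfl fun t ht => by
          rw [if_neg (Finset.mem_filter.mp (hNTmsub ht)).2]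
    have hdep : ∀ t ∈ Tset ∪ NTm m, DepOn ({t, Q t} : Finset (SP n)) (hf t) := by
      intro t _ x y hxy
      have h1 : x t = y t := hxy t (Finset.mem_insert_self _ _)
      have h2 : x (Q t) = y (Q t) :=
        hxy (Q t) (Finset.mem_insert_of_mem (Finset.mem_singleton_self _))
      rw [hhf, hχ]
      dsimp only
      rw [h1, h2]
    have hdisj : ∀ t ∈ Tset ∪ NTm m, ∀ t' ∈ Tset ∪ NTm m, t ≠ t' →
        Disjoint ({t, Q t} : Finset (SP n)) {t', Q t'} := by
      intro t ht t' ht' hne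
      have hQQ : Q t ≠ Q t' := fun h => hne (hQinj (hUsub ht) (hUsub ht') h)
      have key : ∀ a ∈ Tset ∪ NTm m, ∀ b ∈ Tset ∪ NTm m, a ≠ b → Q a ≠ b := by
        intro a ha b hb hab h
        rcases Finset.mem_union.mp ha with haT | haN
        · exact hab ((Finset.mem_filter.mp haT).2.symm.trans h)
        · rcases Finset.mem_union.mp hb with hbT | hbN
          · exact hab (hQinj (hUsub ha) (hUsub hb)
              (h.trans (Finset.mem_filter.mp hbT).2.symm))
          · have hcols : col a = col b := by
              rw [(Finset.mem_filter.mp haN).2, (Finset.mem_filter.mp hbN).2]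
            exact (hcol a (hNTmsub haN) b (hNTmsub hbN) hab hcols).1 h
      rw [Finset.disjoint_left]
      intro u hu hu'
      simp only [Finset.mem_insert, Finset.mem_singleton] at hu hu'
      rcases hu with rfl | rfl
      · rcases hu' with h | h
        · exact hne h
        · exact key t' ht' u ht (fun he => hne he.symm) h.symm
      · rcases hu' with h | h
        · exact key t ht t' ht' hne h
        · exact hQQ h
    rw [hprodform, Ew_prod_of_depOn w hw1 (fun t => ({t, Q t} : Finset (SP n))) hf hdep hdisj]
    have hc1 : 0 ≤ γ1 * (Real.exp (2 * θ) - 1) :=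
      mul_nonneg hγ1 (by linarith)
    have hc2 : 0 ≤ γ2 ^ 2 * (Real.exp (6 * θ) - 1) :=
      mul_nonneg (sq_nonneg _) (by linarith)
    have hb1 : ∏ t ∈ Tset, Ew w (hf t) ≤ Real.exp (γ1 * (Real.exp (2 * θ) - 1)) ^ Tset.card := by
      rw [← Finset.prod_const]
      refine Finset.prod_le_prod (fun t _ => Ew_nonneg w hw0 fun x => Real.exp_nonneg _)
        (fun t ht => le_trans (htrans t (Finset.mem_filter.mp ht).2) ?_)
      linarith [Real.add_one_le_exp (γ1 * (Real.exp (2 * θ) - 1))]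
    have hb2 : ∏ t ∈ NTm m, Ew w (hf t)
        ≤ Real.exp (γ2 ^ 2 * (Real.exp (6 * θ) - 1)) ^ (NTm m).card := by
      rw [← Finset.prod_const]
      refine Finset.prod_le_prod (fun t _ => Ew_nonneg w hw0 fun x => Real.exp_nonneg _)
        (fun t ht => le_trans (hnont t (Finset.mem_filter.mp (hNTmsub ht)).2) ?_)
      linarith [Real.add_one_le_exp (γ2 ^ 2 * (Real.exp (6 * θ) - 1))]
    calc ∏ t ∈ Tset ∪ NTm m, Ew w (hf t)
        = (∏ t ∈ Tset, Ew w (hf t)) * ∏ t ∈ NTm m, Ew w (hf t) := Finset.prod_union hdisjTm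
      _ ≤ Real.exp (γ1 * (Real.exp (2 * θ) - 1)) ^ Tset.card
          * Real.exp (γ2 ^ 2 * (Real.exp (6 * θ) - 1)) ^ (NTm m).card := by
          refine mul_le_mul hb1 hb2
            (Finset.prod_nonneg fun t _ => Ew_nonneg w hw0 fun x => Real.exp_nonneg _)
            (pow_nonneg (Real.exp_nonneg _) _)
      _ ≤ Bd := by
          rw [← Real.exp_nat_mul, ← Real.exp_nat_mul, ← Real.exp_add, hBd]
          apply Real.exp_le_exp.mpr
          have h1 : (Tset.card : ℝ) * (γ1 * (Real.exp (2 * θ) - 1))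
              ≤ cT / 2 * (γ1 * (Real.exp (2 * θ) - 1)) :=
            mul_le_mul_of_nonneg_right (by linarith) hc1
          have hcle : ((NTm m).card : ℝ) ≤ cN := by
            refine le_trans ?_ hcN
            exact_mod_cast Finset.card_le_card (hNTmsub.trans hNTsub)
          have h2 : ((NTm m).card : ℝ) * (γ2 ^ 2 * (Real.exp (6 * θ) - 1))
              ≤ cN * (γ2 ^ 2 * (Real.exp (6 * θ) - 1)) :=
            mul_le_mul_of_nonneg_right hcle hc2
          linarith
  -- assemble
  have hstart : (fun x : SP n → Bool × Bool => Real.exp (θ * ∑ t ∈ Terms,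
      (2 * (if (x t).1 = true ∧ (x (Q t)).2 = true then (1:ℝ) else 0))))
      = fun x => Real.exp (θ * ∑ t ∈ Terms, (2 * χ t x)) := by
    rw [hχ]
  rw [hstart]
  calc Ew w (fun x => Real.exp (θ * ∑ t ∈ Terms, (2 * χ t x)))
      ≤ Ew w (fun x => (1/3) * ∑ m : Fin 3, Gm m x) := Ew_mono w hw0 hpt
    _ = (1/3) * ∑ m : Fin 3, Ew w (Gm m) := by
        rw [Ew_const_mul w (1/3) (fun x => ∑ m : Fin 3, Gm m x), Ew_sum w Finset.univ Gm]
    _ ≤ (1/3) * ∑ m : Fin 3, Bd := by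
        refine mul_le_mul_of_nonneg_left (Finset.sum_le_sum fun m _ => hmbound m) (by norm_num)
    _ = Bd := by
        rw [Finset.sum_const]
        simp

end CoreBound

section Helpers
variable {n : ℕ}

lemma mkSP_diag (jk : SP n) (a : Fin n) : mkSP jk a a = jk := by
  unfold mkSP
  rw [dif_neg (lt_irrefl a), dif_neg (lt_irrefl a)]

lemma mat_sorted (x : SP n → Bool × Bool) (sel : Bool × Bool → Bool) (t : SP n) :
    mat x sel t.1.1 t.1.2 = sel (x t) := by
  unfold mat
  rw [dif_pos t.2]

end Helpers

section PairPFacts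

def pairP' (p q s : ℝ) (same : Bool) (x y : Bool) : ℝ :=
  if x && y then s ^ 2 * (if same then p else q)
  else if x || y then s * (1 - s) * (if same then p else q)
  else 1 - (2 * s - s ^ 2) * (if same then p else q)

lemma aux_nonneg {s r : ℝ} (hs0 : 0 ≤ s) (hs1 : s ≤ 1) (hr0 : 0 ≤ r) (hr1 : r ≤ 1) :
    0 ≤ s^2*r ∧ 0 ≤ s*(1-s)*r ∧ 0 ≤ 1 - (2*s - s^2)*r := by
  refine ⟨mul_nonneg (sq_nonneg s) hr0, mul_nonneg (mul_nonneg hs0 (by linarith)) hr0, ?_⟩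
  have h1 : 0 ≤ 2*s - s^2 := by nlinarith
  have h2 : 2*s - s^2 ≤ 1 := by nlinarith [sq_nonneg (1-s)]
  have h3 : (2*s - s^2) * r ≤ 1 := le_trans (mul_le_of_le_one_right h1 hr1) h2
  linarith

lemma pairP'_nonneg {p q s : ℝ} (hp0 : 0 ≤ p) (hp1 : p ≤ 1) (hq0 : 0 ≤ q) (hq1 : q ≤ 1)
    (hs0 : 0 ≤ s) (hs1 : s ≤ 1) (sm x y : Bool) : 0 ≤ pairP' p q s sm x y := by
  have hr0 : 0 ≤ (if sm then p else q) := by cases sm <;> simpa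
  have hr1 : (if sm then p else q) ≤ 1 := by cases sm <;> simpa
  obtain ⟨h1, h2, h3⟩ := aux_nonneg hs0 hs1 hr0 hr1
  unfold pairP'
  split_ifs <;> simp_all

lemma pairP'_sum (p q s : ℝ) (sm : Bool) :
    ∑ b : Bool × Bool, pairP' p q s sm b.1 b.2 = 1 := by
  rw [Fintype.sum_prod_type, Fintype.sum_bool, Fintype.sum_bool, Fintype.sum_bool]
  cases sm <;> simp [pairP'] <;> ring

lemma pairP'_tt {p q s : ℝ} (hp0 : 0 ≤ p) (hq0 : 0 ≤ q) (hs0 : 0 ≤ s) (sm : Bool) :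
    pairP' p q s sm true true ≤ s ^ 2 * max p q := by
  have h : pairP' p q s sm true true = s ^ 2 * (if sm then p else q) := by
    simp [pairP']
  rw [h]
  refine mul_le_mul_of_nonneg_left ?_ (sq_nonneg s)
  cases sm <;> simp [le_max_left, le_max_right]

lemma pairP'_marg1 {p q s : ℝ} (hp0 : 0 ≤ p) (hq0 : 0 ≤ q) (hs0 : 0 ≤ s) (hs1 : s ≤ 1)
    (sm : Bool) :
    ∑ b : Bool × Bool, pairP' p q s sm b.1 b.2 * (if b.1 = true then 1 else 0)
      ≤ s * max p q := by
  rw [Fintype.sum_prod_type, Fintype.sum_bool, Fintype.sum_bool, Fintype.sum_bool]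
  cases sm
  · simp [pairP']
    nlinarith [mul_le_mul_of_nonneg_left (le_max_right p q) hs0]
  · simp [pairP']
    nlinarith [mul_le_mul_of_nonneg_left (le_max_left p q) hs0]

lemma pairP'_marg2 {p q s : ℝ} (hp0 : 0 ≤ p) (hq0 : 0 ≤ q) (hs0 : 0 ≤ s) (hs1 : s ≤ 1)
    (sm : Bool) :
    ∑ b : Bool × Bool, pairP' p q s sm b.1 b.2 * (if b.2 = true then 1 else 0)
      ≤ s * max p q := by
  rw [Fintype.sum_prod_type, Fintype.sum_bool, Fintype.sum_bool, Fintype.sum_bool]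
  cases sm
  · simp [pairP']
    nlinarith [mul_le_mul_of_nonneg_left (le_max_right p q) hs0]
  · simp [pairP']
    nlinarith [mul_le_mul_of_nonneg_left (le_max_left p q) hs0]

end PairPFacts


lemma pairP_eq_pairP' : @pairP = @pairP' := rfl

/-- in `CSBM(n, p, q, s)` with ground truth permutation `π` (so that the
adjacency of `G₂` is `B_{xy} = B'_{π⁻¹(x)π⁻¹(y)}`), for `d, k ∈ [n]`, any `π`-maximal
matching `(M, μ)` with exactly `d` errors, and any `θ > 0`,
`P(f(μ) ≥ kd) ≤ 3 exp[d(−θk + ½s²γ(e^{2θ}−1) + n(sγ)²(e^{6θ}−1))]`, `γ = max{p,q}`. -/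
theorem statement10 {Ω : Type} [MeasurableSpace Ω] (ℙ : Measure Ω)
    [IsProbabilityMeasure ℙ] (n : ℕ) (p q s : ℝ)
    (hp0 : 0 ≤ p) (hp1 : p ≤ 1) (hq0 : 0 ≤ q) (hq1 : q ≤ 1) (hs0 : 0 ≤ s) (hs1 : s ≤ 1)
    (σ : Ω → Fin n → Bool) (A B' : Ω → Fin n → Fin n → Bool)
    (hmeas : ∀ (ℓ : Fin n → Bool) (e1 e2 : Fin n → Fin n → Bool),
      MeasurableSet {ω | σ ω = ℓ ∧ A ω = e1 ∧ B' ω = e2})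
    (hlaw : csbmLaw ℙ n p q s σ A B')
    (πs : Equiv.Perm (Fin n)) (d k : ℕ)
    (hd1 : 1 ≤ d) (hdn : d ≤ n) (hk1 : 1 ≤ k) (hkn : k ≤ n)
    (M : Finset (Fin n)) (μ : Fin n → Fin n) (hinj : Set.InjOn μ ↑M)
    (hmax : ∀ i : Fin n, i ∈ M ∨ πs i ∈ M.image μ)
    (herr : (M.filter (fun i => μ i ≠ πs i)).card = d)
    (θ : ℝ) (hθ : 0 < θ) :
    (ℙ {ω | k * d ≤ ∑ i ∈ M.filter (fun i => μ i ≠ πs i),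
        (M.filter (fun j => j ≠ i ∧ A ω i j = true ∧
          B' ω (πs.symm (μ i)) (πs.symm (μ j)) = true)).card}).toReal
      ≤ 3 * Real.exp ((d : ℝ) * (-θ * k
          + (1 / 2) * s ^ 2 * max p q * (Real.exp (2 * θ) - 1)
          + n * (s * max p q) ^ 2 * (Real.exp (6 * θ) - 1))) := by

  classical
  obtain ⟨hlaw1, hlaw2⟩ := hlaw
  set D := M.filter (fun i => μ i ≠ πs i) with hD
  set ρ : Fin n → Fin n := fun i => πs.symm (μ i) with hρ
  have hDM : D ⊆ M := Finset.filter_subset _ _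
  have hρinj : Set.InjOn ρ ↑M := fun a ha b hb h => hinj ha hb (πs.symm.injective h)
  have hDne : ∀ i ∈ D, ρ i ≠ i := by
    intro i hi h
    exact (Finset.mem_filter.mp hi).2 ((Equiv.symm_apply_eq πs).mp h)
  have hDcard : D.card = d := herr
  obtain ⟨i0, hi0⟩ : ∃ i, i ∈ D := (Finset.card_pos.mp (by omega)).imp fun _ h => h
  have hne0 : ρ i0 ≠ i0 := hDne i0 hi0
  obtain ⟨jk⟩ : Nonempty (SP n) := by
    rcases lt_or_gt_of_ne hne0 with h | h
    · exact ⟨⟨(ρ i0, i0), h⟩⟩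
    · exact ⟨⟨(i0, ρ i0), h⟩⟩
  set Q : SP n → SP n := fun t => mkSP jk (ρ t.1.1) (ρ t.1.2) with hQ
  set Terms : Finset (SP n) := Finset.univ.filter
    (fun t => (t.1.1 ∈ D ∧ t.1.2 ∈ M) ∨ (t.1.2 ∈ D ∧ t.1.1 ∈ M)) with hTerms
  have hTmem : ∀ t ∈ Terms, t.1.1 ∈ M ∧ t.1.2 ∈ M := by
    intro t ht
    rcases (Finset.mem_filter.mp ht).2 with ⟨h1, h2⟩ | ⟨h1, h2⟩
    · exact ⟨hDM h1, h2⟩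
    · exact ⟨h2, hDM h1⟩
  have hρne : ∀ a b : Fin n, a ∈ M → b ∈ M → a ≠ b → ρ a ≠ ρ b :=
    fun a b ha hb hab h => hab (hρinj ha hb h)
  have hQinj : Set.InjOn Q ↑Terms := by
    intro t ht t' ht' h
    have hm := hTmem t (Finset.mem_coe.mp ht)
    have hm' := hTmem t' (Finset.mem_coe.mp ht')
    have hv := mkSP_val jk (hρne _ _ hm.1 hm.2 (ne_of_lt t.2))
    have hv' := mkSP_val jk (hρne _ _ hm'.1 hm'.2 (ne_of_lt t'.2))
    have hvv : (mkSP jk (ρ t.1.1) (ρ t.1.2)).1 = (mkSP jk (ρ t'.1.1) (ρ t'.1.2)).1 := by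
      show (Q t).1 = (Q t').1
      rw [h]
    have hor : (ρ t.1.1 = ρ t'.1.1 ∧ ρ t.1.2 = ρ t'.1.2)
        ∨ (ρ t.1.1 = ρ t'.1.2 ∧ ρ t.1.2 = ρ t'.1.1) := by
      rcases hv with h1 | h1 <;> rcases hv' with h2 | h2 <;> rw [h1, h2] at hvv
      · exact Or.inl ⟨congrArg Prod.fst hvv, congrArg Prod.snd hvv⟩
      · exact Or.inr ⟨congrArg Prod.fst hvv, congrArg Prod.snd hvv⟩
      · exact Or.inr ⟨congrArg Prod.snd hvv, congrArg Prod.fst hvv⟩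
      · exact Or.inl ⟨congrArg Prod.snd hvv, congrArg Prod.fst hvv⟩
    rcases hor with ⟨h1, h2⟩ | ⟨h1, h2⟩
    · exact Subtype.ext (Prod.ext (hρinj hm.1 hm'.1 h1) (hρinj hm.2 hm'.2 h2))
    · have e1 : t.1.1 = t'.1.2 := hρinj hm.1 hm'.2 h1
      have e2 : t.1.2 = t'.1.1 := hρinj hm.2 hm'.1 h2
      have : t.1.1 < t.1.1 := by
        calc t.1.1 < t.1.2 := t.2
          _ = t'.1.1 := e2
          _ < t'.1.2 := t'.2
          _ = t.1.1 := e1.symm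
      exact absurd this (lt_irrefl _)
  set χn : SP n → (SP n → Bool × Bool) → ℕ :=
    fun t x => if (x t).1 = true ∧ (x (Q t)).2 = true then 1 else 0 with hχn
  set FF : (Fin n → Fin n → Bool) → (Fin n → Fin n → Bool) → ℕ := fun e1 e2 =>
    ∑ i ∈ D, (M.filter (fun j => j ≠ i ∧ e1 i j = true ∧ e2 (ρ i) (ρ j) = true)).card
    with hFF
  have hFle : ∀ x : SP n → Bool × Bool,
      FF (mat x Prod.fst) (mat x Prod.snd) ≤ ∑ t ∈ Terms, 2 * χn t x := by
    intro x
    set ind : Fin n × Fin n → ℕ := fun ij =>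
      if (ij.2 ≠ ij.1 ∧ mat x Prod.fst ij.1 ij.2 = true ∧
          mat x Prod.snd (ρ ij.1) (ρ ij.2) = true) then 1 else 0 with hind
    have h0 : FF (mat x Prod.fst) (mat x Prod.snd) = ∑ ij ∈ D ×ˢ M, ind ij := by
      simp only [hFF]
      rw [Finset.sum_product D M ind]
      refine Finset.sum_congr rfl fun i _ => ?_
      rw [Finset.card_filter]
    have hmapsto : ∀ ij ∈ D ×ˢ M, mkSP jk ij.1 ij.2 ∈ Terms ∪ {jk} := by
      intro ij hij
      obtain ⟨hij1, hij2⟩ := Finset.mem_product.mp hij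
      by_cases hd : ij.1 = ij.2
      · rw [hd, mkSP_diag]
        exact Finset.mem_union_right _ (Finset.mem_singleton_self _)
      · refine Finset.mem_union_left _ ?_
        rcases mkSP_val jk hd with hv | hv
        · refine Finset.mem_filter.mpr ⟨Finset.mem_univ _, Or.inl ?_⟩
          rw [hv]
          exact ⟨hij1, hij2⟩
        · refine Finset.mem_filter.mpr ⟨Finset.mem_univ _, Or.inr ?_⟩
          rw [hv]
          exact ⟨hij1, hij2⟩
    have hfib := Finset.sum_fiberwise_of_maps_to hmapsto ind
    rw [h0, ← hfib]
    have hperfiber : ∀ t ∈ Terms ∪ {jk},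
        (∑ ij ∈ (D ×ˢ M).filter (fun ij => mkSP jk ij.1 ij.2 = t), ind ij)
          ≤ if t ∈ Terms then 2 * χn t x else 0 := by
      intro t ht
      by_cases hT : t ∈ Terms
      · rw [if_pos hT]
        have hptwise : ∀ ij ∈ (D ×ˢ M).filter (fun ij => mkSP jk ij.1 ij.2 = t),
            ind ij ≤ if ij ∈ ({(t.1.1, t.1.2), (t.1.2, t.1.1)} :
              Finset (Fin n × Fin n)) then χn t x else 0 := by
          rintro ⟨i, j⟩ hij
          obtain ⟨hijm, hfibt⟩ := Finset.mem_filter.mp hij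
          obtain ⟨hij1, hij2⟩ := Finset.mem_product.mp hijm
          dsimp only at hij1 hij2 hfibt
          by_cases hd : j = i
          · have hz : ind (i, j) = 0 := by
              simp only [hind]
              exact if_neg (fun hc => hc.1 hd)
            rw [hz]
            exact Nat.zero_le _
          · have hd' : i ≠ j := fun h => hd h.symm
            have hvv := mkSP_val jk hd'
            rw [hfibt] at hvv
            have hcond : (i, j) ∈ ({(t.1.1, t.1.2), (t.1.2, t.1.1)} :
                Finset (Fin n × Fin n)) := by
              rcases hvv with hh | hh
              · exact Finset.mem_insert.mpr (Or.inl (by rw [hh]))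
              · exact Finset.mem_insert.mpr (Or.inr (Finset.mem_singleton.mpr (by rw [hh])))
            rw [if_pos hcond]
            have hiM : i ∈ M := hDM hij1
            have hρd : ρ i ≠ ρ j := hρne _ _ hiM hij2 hd'
            have hQeq : mkSP jk (ρ i) (ρ j) = Q t := by
              rcases hvv with hh | hh
              · have hi : i = t.1.1 := by rw [hh]
                have hj : j = t.1.2 := by rw [hh]
                rw [hi, hj]
              · have hi : i = t.1.2 := by rw [hh]
                have hj : j = t.1.1 := by rw [hh]
                rw [hi, hj, mkSP_comm]
            have hval : ind (i, j) = χn t x := by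
              simp only [hind, hχn]
              rw [mat_eq x Prod.fst jk hd', mat_eq x Prod.snd jk hρd, hQeq, hfibt]
              rw [if_congr (and_iff_right hd) rfl rfl]
            rw [hval]
        refine le_trans (Finset.sum_le_sum hptwise) ?_
        rw [Finset.sum_ite_mem, Finset.sum_const, smul_eq_mul]
        refine Nat.mul_le_mul_right _ ?_
        refine le_trans (Finset.card_le_card Finset.inter_subset_right) ?_
        refine le_trans (Finset.card_insert_le _ _) ?_
        simp
      · rw [if_neg hT]
        refine le_of_eq (Finset.sum_eq_zero fun ij hij => ?_)
        obtain ⟨hijm, hfibt⟩ := Finset.mem_filter.mp hij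
        by_cases hd : ij.1 = ij.2
        · simp only [hind]
          exact if_neg (fun hc => hc.1 hd.symm)
        · exfalso
          apply hT
          rw [← hfibt]
          obtain ⟨hij1, hij2⟩ := Finset.mem_product.mp hijm
          rcases mkSP_val jk hd with hv | hv
          · exact Finset.mem_filter.mpr ⟨Finset.mem_univ _,
              Or.inl (by rw [hv]; exact ⟨hij1, hij2⟩)⟩
          · exact Finset.mem_filter.mpr ⟨Finset.mem_univ _,
              Or.inr (by rw [hv]; exact ⟨hij1, hij2⟩)⟩
    refine le_trans (Finset.sum_le_sum hperfiber) (le_of_eq ?_)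
    rw [Finset.sum_ite_mem, Finset.union_inter_cancel_left]
  have hTcard : 2 * (Terms.filter (fun t => Q t = t)).card ≤ d := by
    set Tf := Terms.filter (fun t => Q t = t) with hTf
    have hkey : ∀ t ∈ Tf, ρ t.1.1 = t.1.2 ∧ ρ t.1.2 = t.1.1 ∧ t.1.1 ∈ D ∧ t.1.2 ∈ D := by
      intro t ht
      obtain ⟨hT, hQt⟩ := Finset.mem_filter.mp ht
      have hm := hTmem t hT
      have hne12 : t.1.1 ≠ t.1.2 := ne_of_lt t.2
      have hvv := mkSP_val jk (hρne _ _ hm.1 hm.2 hne12)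
      rw [show mkSP jk (ρ t.1.1) (ρ t.1.2) = Q t from rfl, hQt] at hvv
      rcases hvv with hh | hh
      · exfalso
        have h1 : t.1.1 = ρ t.1.1 := congrArg Prod.fst hh
        have h2 : t.1.2 = ρ t.1.2 := congrArg Prod.snd hh
        rcases (Finset.mem_filter.mp hT).2 with ⟨hd1, _⟩ | ⟨hd1, _⟩
        · exact hDne _ hd1 h1.symm
        · exact hDne _ hd1 h2.symm
      · have h1 : t.1.1 = ρ t.1.2 := congrArg Prod.fst hh
        have h2 : t.1.2 = ρ t.1.1 := congrArg Prod.snd hh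
        have hmemD : t.1.1 ∈ D ∧ t.1.2 ∈ D := by
          rcases (Finset.mem_filter.mp hT).2 with ⟨hd1, hm2⟩ | ⟨hd1, hm2⟩
          · refine ⟨hd1, Finset.mem_filter.mpr ⟨hm2, fun heq => ?_⟩⟩
            have : ρ t.1.2 = t.1.2 := by
              show πs.symm (μ t.1.2) = t.1.2
              rw [heq]
              exact πs.symm_apply_apply t.1.2
            exact hne12 (h1.trans this)
          · refine ⟨Finset.mem_filter.mpr ⟨hm2, fun heq => ?_⟩, hd1⟩
            have : ρ t.1.1 = t.1.1 := by
              show πs.symm (μ t.1.1) = t.1.1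
              rw [heq]
              exact πs.symm_apply_apply t.1.1
            exact hne12 (h2.trans this).symm
        exact ⟨h2.symm, h1.symm, hmemD⟩
    have hdisjE : ∀ t1 ∈ Tf, ∀ t2 ∈ Tf, t1 ≠ t2 →
        Disjoint ({t1.1.1, t1.1.2} : Finset (Fin n)) {t2.1.1, t2.1.2} := by
      intro t1 ht1 t2 ht2 hne
      obtain ⟨hk1, hk1', _, _⟩ := hkey t1 ht1
      obtain ⟨hk2, hk2', _, _⟩ := hkey t2 ht2
      rw [Finset.disjoint_left]
      intro u hu hu'
      simp only [Finset.mem_insert, Finset.mem_singleton] at hu hu'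
      apply hne
      rcases hu with rfl | rfl <;> rcases hu' with h | h
      · refine Subtype.ext (Prod.ext h ?_)
        rw [← hk1, ← hk2, h]
      · exfalso
        have e2 : t1.1.2 = t2.1.1 := by rw [← hk1, ← hk2', h]
        have : t1.1.1 < t1.1.1 := by
          calc t1.1.1 < t1.1.2 := t1.2
            _ = t2.1.1 := e2
            _ < t2.1.2 := t2.2
            _ = t1.1.1 := h.symm
        exact absurd this (lt_irrefl _)
      · exfalso
        have e2 : t1.1.1 = t2.1.2 := by rw [← hk1', ← hk2, h]
        have : t1.1.1 < t1.1.1 := by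
          calc t1.1.1 < t1.1.2 := t1.2
            _ = t2.1.1 := h
            _ < t2.1.2 := t2.2
            _ = t1.1.1 := e2.symm
        exact absurd this (lt_irrefl _)
      · refine Subtype.ext (Prod.ext ?_ h)
        rw [← hk1', ← hk2', h]
    have hsub : Tf.biUnion (fun t => ({t.1.1, t.1.2} : Finset (Fin n))) ⊆ D := by
      intro u hu
      obtain ⟨t, ht, hut⟩ := Finset.mem_biUnion.mp hu
      obtain ⟨_, _, hd1, hd2⟩ := hkey t ht
      rcases Finset.mem_insert.mp hut with rfl | h
      · exact hd1
      · rw [Finset.mem_singleton.mp h]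
        exact hd2
    have hcount : (Tf.biUnion (fun t => ({t.1.1, t.1.2} : Finset (Fin n)))).card
        = 2 * Tf.card := by
      rw [Finset.card_biUnion hdisjE]
      rw [Finset.sum_congr rfl fun t _ => Finset.card_pair (ne_of_lt t.2)]
      rw [Finset.sum_const, smul_eq_mul, Nat.mul_comm]
    calc 2 * Tf.card = _ := hcount.symm
      _ ≤ D.card := Finset.card_le_card hsub
      _ = d := hDcard
  have hNcard : Terms.card ≤ d * n := by
    have hprod : (D ×ˢ (Finset.univ : Finset (Fin n))).card = d * n := by
      rw [Finset.card_product, hDcard, Finset.card_univ, Fintype.card_fin]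
    rw [← hprod]
    refine Finset.card_le_card_of_injOn
      (fun t => if t.1.1 ∈ D then t.1 else t.1.swap) ?_ ?_
    · intro t ht
      dsimp only
      rcases (Finset.mem_filter.mp ht).2 with ⟨h1, _⟩ | ⟨h1, _⟩
      · rw [if_pos h1]
        exact Finset.mem_product.mpr ⟨h1, Finset.mem_univ _⟩
      · by_cases hd : t.1.1 ∈ D
        · rw [if_pos hd]
          exact Finset.mem_product.mpr ⟨hd, Finset.mem_univ _⟩
        · rw [if_neg hd]
          exact Finset.mem_product.mpr ⟨h1, Finset.mem_univ _⟩
    · intro t ht t' ht' h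
      dsimp only at h
      by_cases h1 : t.1.1 ∈ D <;> by_cases h2 : t'.1.1 ∈ D
      · rw [if_pos h1, if_pos h2] at h
        exact Subtype.ext h
      · rw [if_pos h1, if_neg h2] at h
        exfalso
        have e1 : t.1.1 = t'.1.2 := congrArg Prod.fst h
        have e2 : t.1.2 = t'.1.1 := congrArg Prod.snd h
        have : t.1.1 < t.1.1 := by
          calc t.1.1 < t.1.2 := t.2
            _ = t'.1.1 := e2
            _ < t'.1.2 := t'.2
            _ = t.1.1 := e1.symm
        exact absurd this (lt_irrefl _)
      · rw [if_neg h1, if_pos h2] at h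
        exfalso
        have e1 : t.1.2 = t'.1.1 := congrArg Prod.fst h
        have e2 : t.1.1 = t'.1.2 := congrArg Prod.snd h
        have : t.1.1 < t.1.1 := by
          calc t.1.1 < t.1.2 := t.2
            _ = t'.1.1 := e1
            _ < t'.1.2 := t'.2
            _ = t.1.1 := e2.symm
        exact absurd this (lt_irrefl _)
      · rw [if_neg h1, if_neg h2] at h
        have e1 : t.1.2 = t'.1.2 := congrArg Prod.fst h
        have e2 : t.1.1 = t'.1.1 := congrArg Prod.snd h
        exact Subtype.ext (Prod.ext e2 e1)
  -- measure-theoretic reduction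
  set Cf := (Fin n → Bool) × ((Fin n → Fin n → Bool) × (Fin n → Fin n → Bool)) with hCf
  set prob : Cf → ℝ := fun c => (1 / 2 : ℝ) ^ n * ∏ i : Fin n, ∏ j : Fin n,
      (if i < j then pairP p q s (c.1 i == c.1 j) (c.2.1 i j) (c.2.2 i j) else 1) with hprob
  set atom : Cf → Set Ω := fun c => {ω | σ ω = c.1 ∧ A ω = c.2.1 ∧ B' ω = c.2.2}
    with hatom
  set C : Finset Cf := Finset.univ.filter
    (fun c => GoodPair c.2 ∧ k * d ≤ FF c.2.1 c.2.2) with hC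
  have hup : (ℙ {ω | k * d ≤ FF (A ω) (B' ω)}).toReal ≤ ∑ c ∈ C, prob c := by
    have hGset : {ω | GoodPair (A ω, B' ω)} =
        ⋃ c ∈ Finset.univ.filter (fun c : Cf => GoodPair c.2), atom c := by
      ext ω
      constructor
      · intro h
        exact Set.mem_iUnion₂.mpr ⟨(σ ω, (A ω, B' ω)),
          Finset.mem_filter.mpr ⟨Finset.mem_univ _, h⟩, ⟨rfl, rfl, rfl⟩⟩
      · intro h
        obtain ⟨c, hc, hω⟩ := Set.mem_iUnion₂.mp h
        obtain ⟨h1, h2, h3⟩ := hω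
        have hg := (Finset.mem_filter.mp hc).2
        show GoodPair (A ω, B' ω)
        rw [h2, h3, Prod.mk.eta]
        exact hg
    have hGmeas : MeasurableSet {ω | GoodPair (A ω, B' ω)} := by
      rw [hGset]
      exact (Finset.univ.filter (fun c : Cf => GoodPair c.2)).measurableSet_biUnion
        (fun c _ => hmeas c.1 c.2.1 c.2.2)
    have hG1 : ℙ {ω | GoodPair (A ω, B' ω)} = 1 := hlaw1
    have hGc0 : ℙ {ω | GoodPair (A ω, B' ω)}ᶜ = 0 := by
      rw [prob_compl_eq_one_sub hGmeas, hG1]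
      simp
    have hsubset : {ω | k * d ≤ FF (A ω) (B' ω)} ⊆
        (⋃ c ∈ C, atom c) ∪ {ω | GoodPair (A ω, B' ω)}ᶜ := by
      intro ω hω
      by_cases hg : GoodPair (A ω, B' ω)
      · left
        exact Set.mem_iUnion₂.mpr ⟨(σ ω, (A ω, B' ω)),
          Finset.mem_filter.mpr ⟨Finset.mem_univ _, hg, hω⟩, ⟨rfl, rfl, rfl⟩⟩
      · right
        exact hg
    have hdisjat : (↑C : Set Cf).PairwiseDisjoint atom := by
      intro c hc c' hc' hne
      refine Set.disjoint_left.mpr fun ω h1 h2 => hne ?_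
      obtain ⟨a1, a2, a3⟩ := h1
      obtain ⟨b1, b2, b3⟩ := h2
      exact Prod.ext (a1.symm.trans b1) (Prod.ext (a2.symm.trans b2) (a3.symm.trans b3))
    have hmeasure : ℙ (⋃ c ∈ C, atom c) = ∑ c ∈ C, ℙ (atom c) :=
      measure_biUnion_finset hdisjat (fun c _ => hmeas c.1 c.2.1 c.2.2)
    have hle : ℙ {ω | k * d ≤ FF (A ω) (B' ω)} ≤ ∑ c ∈ C, ℙ (atom c) := by
      calc ℙ {ω | k * d ≤ FF (A ω) (B' ω)}
          ≤ ℙ ((⋃ c ∈ C, atom c) ∪ {ω | GoodPair (A ω, B' ω)}ᶜ) := measure_mono hsubset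
        _ ≤ ℙ (⋃ c ∈ C, atom c) + ℙ ({ω | GoodPair (A ω, B' ω)}ᶜ) := measure_union_le _ _
        _ = ∑ c ∈ C, ℙ (atom c) := by rw [hGc0, hmeasure, add_zero]
    calc (ℙ {ω | k * d ≤ FF (A ω) (B' ω)}).toReal
        ≤ (∑ c ∈ C, ℙ (atom c)).toReal := by
          refine ENNReal.toReal_mono ?_ hle
          exact ENNReal.sum_ne_top.mpr fun c _ => measure_ne_top ℙ _
      _ = ∑ c ∈ C, (ℙ (atom c)).toReal :=
          ENNReal.toReal_sum fun c _ => measure_ne_top ℙ _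
      _ = ∑ c ∈ C, prob c := by
          refine Finset.sum_congr rfl fun c hc => ?_
          have hg := (Finset.mem_filter.mp hc).2.1
          exact hlaw2 c.1 c.2.1 c.2.2 hg.1 hg.2
  have hprob0 : ∀ c : Cf, 0 ≤ prob c := by
    intro c
    refine mul_nonneg (by positivity) (Finset.prod_nonneg fun i _ =>
      Finset.prod_nonneg fun j _ => ?_)
    split_ifs
    · exact pairP'_nonneg hp0 hp1 hq0 hq1 hs0 hs1 _ _ _
    · norm_num
  -- analytic bound on the sum
  have hsumbound : ∑ c ∈ C, prob c ≤
      Real.exp (- θ * (k * d : ℕ) + (d : ℝ) / 2 * ((s ^ 2 * max p q) * (Real.exp (2 * θ) - 1))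
        + ((d : ℝ) * n) * ((s * max p q) ^ 2 * (Real.exp (6 * θ) - 1))) := by
    set γ1 : ℝ := s ^ 2 * max p q with hγ1d
    set γ2 : ℝ := s * max p q with hγ2d
    have hγ10 : 0 ≤ γ1 := by
      rw [hγ1d]
      exact mul_nonneg (sq_nonneg s) (le_trans hp0 (le_max_left p q))
    have hγ20 : 0 ≤ γ2 := by
      rw [hγ2d]
      exact mul_nonneg hs0 (le_trans hp0 (le_max_left p q))
    set w : (Fin n → Bool) → SP n → Bool × Bool → ℝ :=
      fun ℓ t b => pairP' p q s (ℓ t.1.1 == ℓ t.1.2) b.1 b.2 with hw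
    have hw0 : ∀ ℓ : Fin n → Bool, ∀ (t : SP n) (b : Bool × Bool), 0 ≤ w ℓ t b := by
      intro ℓ t b
      simp only [hw]
      exact pairP'_nonneg hp0 hp1 hq0 hq1 hs0 hs1 _ _ _
    have hw1 : ∀ ℓ : Fin n → Bool, ∀ t : SP n, ∑ b : Bool × Bool, w ℓ t b = 1 := by
      intro ℓ t
      simp only [hw]
      exact pairP'_sum p q s _
    set EB : ℝ := Real.exp ((d : ℝ) / 2 * (γ1 * (Real.exp (2 * θ) - 1))
        + ((d : ℝ) * n) * (γ2 ^ 2 * (Real.exp (6 * θ) - 1))) with hEB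
    -- core bound for each label vector
    have hcore : ∀ ℓ : Fin n → Bool,
        Ew (w ℓ) (fun x => Real.exp (θ * (FF (mat x Prod.fst) (mat x Prod.snd) : ℝ)))
          ≤ EB := by
      intro ℓ
      refine le_trans (Ew_mono (w ℓ) (hw0 ℓ) (g' := fun x => Real.exp (θ * ∑ t ∈ Terms,
          (2 * (if (x t).1 = true ∧ (x (Q t)).2 = true then (1:ℝ) else 0)))) ?_) ?_
      · intro x
        refine Real.exp_le_exp.mpr (mul_le_mul_of_nonneg_left ?_ (le_of_lt hθ))
        calc (FF (mat x Prod.fst) (mat x Prod.snd) : ℝ)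
            ≤ ((∑ t ∈ Terms, 2 * χn t x : ℕ) : ℝ) := Nat.cast_le.mpr (hFle x)
          _ = ∑ t ∈ Terms, (2 * (if (x t).1 = true ∧ (x (Q t)).2 = true
                then (1:ℝ) else 0)) := by
              rw [Nat.cast_sum]
              refine Finset.sum_congr rfl fun t _ => ?_
              simp only [hχn]
              split_ifs <;> simp
      · rw [hEB]
        refine core_bound Q Terms hQinj (w ℓ) (hw0 ℓ) (hw1 ℓ) γ1 γ2 hγ10 hγ20
          ?_ ?_ ?_ θ hθ (d : ℝ) ((d : ℝ) * n) ?_ (Nat.cast_nonneg d) ?_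
        · intro t
          simp only [hw]
          rw [hγ1d]
          exact pairP'_tt hp0 hq0 hs0 _
        · intro t
          simp only [hw]
          rw [hγ2d]
          exact pairP'_marg1 hp0 hq0 hs0 hs1 _
        · intro t
          simp only [hw]
          rw [hγ2d]
          exact pairP'_marg2 hp0 hq0 hs0 hs1 _
        · exact_mod_cast hTcard
        · exact_mod_cast hNcard
    -- Chernoff and reparametrization
    set Cg : Finset Cf := Finset.univ.filter (fun c => GoodPair c.2) with hCg
    have hCsub : C ⊆ Cg := by
      intro c hc
      exact Finset.mem_filter.mpr ⟨Finset.mem_univ _, (Finset.mem_filter.mp hc).2.1⟩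
    have hstepA : ∑ c ∈ C, prob c ≤ Real.exp (- θ * ((k * d : ℕ) : ℝ)) *
        ∑ c ∈ Cg, prob c * Real.exp (θ * (FF c.2.1 c.2.2 : ℝ)) := by
      rw [Finset.mul_sum]
      refine le_trans (Finset.sum_le_sum (fun c hc => ?_))
        (Finset.sum_le_sum_of_subset_of_nonneg hCsub (fun c _ _ =>
          mul_nonneg (Real.exp_nonneg _)
            (mul_nonneg (hprob0 c) (Real.exp_nonneg _))))
      have hkd : ((k * d : ℕ) : ℝ) ≤ (FF c.2.1 c.2.2 : ℝ) :=
        Nat.cast_le.mpr (Finset.mem_filter.mp hc).2.2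
      have hone : (1:ℝ) ≤ Real.exp (- θ * ((k * d : ℕ) : ℝ))
          * Real.exp (θ * (FF c.2.1 c.2.2 : ℝ)) := by
        rw [← Real.exp_add]
        refine Real.one_le_exp ?_
        nlinarith
      calc prob c = prob c * 1 := (mul_one _).symm
        _ ≤ prob c * (Real.exp (- θ * ((k * d : ℕ) : ℝ))
            * Real.exp (θ * (FF c.2.1 c.2.2 : ℝ))) :=
            mul_le_mul_of_nonneg_left hone (hprob0 c)
        _ = Real.exp (- θ * ((k * d : ℕ) : ℝ))
            * (prob c * Real.exp (θ * (FF c.2.1 c.2.2 : ℝ))) := by ring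
    have hCgprod : Cg = (Finset.univ : Finset (Fin n → Bool)) ×ˢ
        (Finset.univ.filter (GoodPair (n := n))) := by
      ext c
      rw [hCg, Finset.mem_filter, Finset.mem_product, Finset.mem_filter]
      simp
    have hstepB : ∑ c ∈ Cg, prob c * Real.exp (θ * (FF c.2.1 c.2.2 : ℝ))
        = ∑ ℓ : Fin n → Bool, (1/2 : ℝ)^n *
            Ew (w ℓ) (fun x => Real.exp (θ * (FF (mat x Prod.fst) (mat x Prod.snd) : ℝ))) := by
      rw [hCgprod, Finset.sum_product]
      refine Finset.sum_congr rfl fun ℓ _ => ?_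
      have h1 : ∀ e : (Fin n → Fin n → Bool) × (Fin n → Fin n → Bool),
          prob (ℓ, e) * Real.exp (θ * (FF (ℓ, e).2.1 (ℓ, e).2.2 : ℝ))
            = (fun e1 e2 => prob (ℓ, (e1, e2)) * Real.exp (θ * (FF e1 e2 : ℝ))) e.1 e.2 :=
        fun e => rfl
      rw [Finset.sum_congr rfl fun e _ => h1 e]
      rw [sum_good_eq (fun e1 e2 => prob (ℓ, (e1, e2)) * Real.exp (θ * (FF e1 e2 : ℝ)))]
      unfold Ew
      rw [Finset.mul_sum]
      refine Finset.sum_congr rfl fun x _ => ?_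
      have hprobx : prob (ℓ, (mat x Prod.fst, mat x Prod.snd))
          = (1/2 : ℝ)^n * ∏ t : SP n, w ℓ t (x t) := by
        simp only [hprob]
        congr 1
        rw [pairP_eq_pairP']
        rw [prod_upper (fun i j => pairP' p q s (ℓ i == ℓ j)
          (mat x Prod.fst i j) (mat x Prod.snd i j))]
        refine Finset.prod_congr rfl fun t _ => ?_
        rw [mat_sorted x Prod.fst t, mat_sorted x Prod.snd t]
      rw [hprobx]
      ring
    have hsum12 : ∑ ℓ : Fin n → Bool, (1/2 : ℝ)^n *
        Ew (w ℓ) (fun x => Real.exp (θ * (FF (mat x Prod.fst) (mat x Prod.snd) : ℝ)))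
          ≤ EB := by
      have hcard : (Fintype.card (Fin n → Bool) : ℝ) = (2 : ℝ)^n := by
        rw [Fintype.card_fun]
        simp
      calc ∑ ℓ : Fin n → Bool, (1/2 : ℝ)^n *
          Ew (w ℓ) (fun x => Real.exp (θ * (FF (mat x Prod.fst) (mat x Prod.snd) : ℝ)))
          ≤ ∑ _ℓ : Fin n → Bool, (1/2 : ℝ)^n * EB := by
            refine Finset.sum_le_sum fun ℓ _ => ?_
            exact mul_le_mul_of_nonneg_left (hcore ℓ) (by positivity)
        _ = EB := by
            rw [Finset.sum_const, nsmul_eq_mul, Finset.card_univ, ← mul_assoc]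
            rw [show ((Fintype.card (Fin n → Bool) : ℝ) * (1/2:ℝ)^n) = 1 by
              rw [hcard, ← mul_pow]; norm_num]
            rw [one_mul]
    calc ∑ c ∈ C, prob c
        ≤ Real.exp (- θ * ((k * d : ℕ) : ℝ)) *
            ∑ c ∈ Cg, prob c * Real.exp (θ * (FF c.2.1 c.2.2 : ℝ)) := hstepA
      _ ≤ Real.exp (- θ * ((k * d : ℕ) : ℝ)) * EB := by
          rw [hstepB]
          exact mul_le_mul_of_nonneg_left hsum12 (Real.exp_nonneg _)
      _ = Real.exp (- θ * (k * d : ℕ) + (d : ℝ) / 2 * (γ1 * (Real.exp (2 * θ) - 1))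
            + ((d : ℝ) * n) * (γ2 ^ 2 * (Real.exp (6 * θ) - 1))) := by
          rw [hEB, ← Real.exp_add]
          ring_nf

  have hfinal : (ℙ {ω | k * d ≤ FF (A ω) (B' ω)}).toReal
      ≤ 3 * Real.exp ((d : ℝ) * (-θ * k
          + (1 / 2) * s ^ 2 * max p q * (Real.exp (2 * θ) - 1)
          + n * (s * max p q) ^ 2 * (Real.exp (6 * θ) - 1))) := by
    refine le_trans (le_trans hup hsumbound) ?_
    have hexp : - θ * (k * d : ℕ) + (d : ℝ) / 2 * ((s ^ 2 * max p q) * (Real.exp (2 * θ) - 1))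
        + ((d : ℝ) * n) * ((s * max p q) ^ 2 * (Real.exp (6 * θ) - 1))
        = (d : ℝ) * (-θ * k + (1 / 2) * s ^ 2 * max p q * (Real.exp (2 * θ) - 1)
          + n * (s * max p q) ^ 2 * (Real.exp (6 * θ) - 1)) := by
      push_cast
      ring
    rw [hexp]
    nlinarith [Real.exp_pos ((d : ℝ) * (-θ * k
      + (1 / 2) * s ^ 2 * max p q * (Real.exp (2 * θ) - 1)
      + n * (s * max p q) ^ 2 * (Real.exp (6 * θ) - 1)))]
  exact hfinal
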